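/- Let n ≥ 1 and let G and H be finite subgroups of GL(n, ℝ), acting on ℝⁿ by matrix–vector multiplication. Let f : ℝⁿ → ℝⁿ be a bijection such that f and f⁻¹ are continuously differentiable, and suppose: (i) for every γ ∈ G and every x ∈ ℝⁿ there exists μ ∈ H with f(γ·x) = μ·f(x); and (ii) for every μ ∈ H and every y ∈ ℝⁿ there exists γ ∈ G with f⁻¹(μ·y) = γ·f⁻¹(y). Then there exists a group isomorphism Θ : G → H such that f(γ·x) = Θ(γ)·f(x) for all γ ∈ G and all x ∈ ℝⁿ (i.e., f is Θ-equivariant). -/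

import Mathlib

open Matrix Set

private lemma matrix_eq_of_mulVec {n : ℕ} {A B : Matrix (Fin n) (Fin n) ℝ}
    (h : ∀ v, A.mulVec v = B.mulVec v) : A = B := by
  ext i j
  have := congrFun (h (Pi.single j 1)) i
  simpa [Matrix.mulVec_single] using this

private noncomputable def LL {n : ℕ} (A : Matrix (Fin n) (Fin n) ℝ) :
    (Fin n → ℝ) →L[ℝ] (Fin n → ℝ) :=
  LinearMap.toContinuousLinearMap (Matrix.mulVecLin A)

private lemma LL_apply {n : ℕ} (A : Matrix (Fin n) (Fin n) ℝ) (x : Fin n → ℝ) :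
    LL A x = A.mulVec x := rfl

private lemma LL_inj {n : ℕ} {A B : Matrix (Fin n) (Fin n) ℝ} (h : LL A = LL B) : A = B :=
  matrix_eq_of_mulVec (fun v => DFunLike.congr_fun h v)

/-- Core rigidity lemma: pointwise intertwining by a finite group implies uniform
intertwining by a single element. -/
private lemma core_uniform {n : ℕ} (H : Subgroup (GL (Fin n) ℝ)) [Finite H]
    (f finv : (Fin n → ℝ) → (Fin n → ℝ))
    (hf : ContDiff ℝ 1 f) (hfinv : ContDiff ℝ 1 finv)
    (hleft : Function.LeftInverse finv f) (hright : Function.RightInverse finv f)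
    (A : Matrix (Fin n) (Fin n) ℝ)
    (hpt : ∀ x, ∃ μ ∈ H, f (A.mulVec x) =
      Matrix.mulVec ((μ : GL (Fin n) ℝ) : Matrix (Fin n) (Fin n) ℝ) (f x)) :
    ∃ μ ∈ H, ∀ x, f (A.mulVec x) =
      Matrix.mulVec ((μ : GL (Fin n) ℝ) : Matrix (Fin n) (Fin n) ℝ) (f x) := by
  classical
  have hDf : Differentiable ℝ f := hf.differentiable one_ne_zero
  have hDfi : Differentiable ℝ finv := hfinv.differentiable one_ne_zero
  -- derivative inverse identities
  have hinv1 : ∀ x : Fin n → ℝ, (fderiv ℝ finv (f x)).comp (fderiv ℝ f x) =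
      ContinuousLinearMap.id ℝ (Fin n → ℝ) := by
    intro x
    have h : finv ∘ f = id := funext hleft
    calc (fderiv ℝ finv (f x)).comp (fderiv ℝ f x)
        = fderiv ℝ (finv ∘ f) x := (fderiv_comp x (hDfi (f x)) (hDf x)).symm
      _ = fderiv ℝ id x := by rw [h]
      _ = ContinuousLinearMap.id ℝ (Fin n → ℝ) := fderiv_id
  have hinv2 : ∀ x : Fin n → ℝ, (fderiv ℝ f x).comp (fderiv ℝ finv (f x)) =
      ContinuousLinearMap.id ℝ (Fin n → ℝ) := by
    intro x
    have h : f ∘ finv = id := funext hright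
    have h2 := fderiv_comp (f x) (hDf (finv (f x))) (hDfi (f x))
    rw [hleft x] at h2
    rw [← h2, h, fderiv_id]
  set M : H → Matrix (Fin n) (Fin n) ℝ :=
    fun μ => ((μ : GL (Fin n) ℝ) : Matrix (Fin n) (Fin n) ℝ) with hM
  set S : H → Set (Fin n → ℝ) := fun μ => {x | f (A.mulVec x) = (M μ).mulVec (f x)} with hS
  have hmvc : ∀ B : Matrix (Fin n) (Fin n) ℝ, Continuous fun x : Fin n → ℝ => B.mulVec x :=
    fun B => (LL B).continuous
  have hSclosed : ∀ μ : H, IsClosed (S μ) := by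
    intro μ
    exact isClosed_eq (hf.continuous.comp (hmvc A)) ((hmvc (M μ)).comp hf.continuous)
  have hScover : ⋃ μ : H, S μ = univ := by
    ext x
    simp only [mem_iUnion, mem_univ, iff_true]
    obtain ⟨μ, hμH, heq⟩ := hpt x
    exact ⟨⟨μ, hμH⟩, heq⟩
  have hW : Dense (⋃ μ : H, interior (S μ)) :=
    dense_iUnion_interior_of_closed hSclosed hScover
  -- the continuous candidate map
  set Gm : (Fin n → ℝ) → ((Fin n → ℝ) →L[ℝ] (Fin n → ℝ)) :=
    fun x => ((fderiv ℝ f (A.mulVec x)).comp (LL A)).comp (fderiv ℝ finv (f x)) with hGm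
  have hGcont : Continuous Gm := by
    have c1 : Continuous fun x : Fin n → ℝ => fderiv ℝ f (A.mulVec x) :=
      (hf.continuous_fderiv one_ne_zero).comp (hmvc A)
    have c2 : Continuous fun x : Fin n → ℝ => fderiv ℝ finv (f x) :=
      (hfinv.continuous_fderiv one_ne_zero).comp hf.continuous
    exact (c1.clm_comp continuous_const).clm_comp c2
  have e2 : ∀ x : Fin n → ℝ, fderiv ℝ (fun y => f (A.mulVec y)) x =
      (fderiv ℝ f (A.mulVec x)).comp (LL A) := by
    intro x
    rw [show (fun y => f (A.mulVec y)) = f ∘ (LL A) from rfl,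
      fderiv_comp x (hDf _) (LL A).differentiableAt, (LL A).fderiv]
    rfl
  have e3 : ∀ (B : Matrix (Fin n) (Fin n) ℝ) (x : Fin n → ℝ),
      fderiv ℝ (fun y => B.mulVec (f y)) x = (LL B).comp (fderiv ℝ f x) := by
    intro B x
    rw [show (fun y => B.mulVec (f y)) = (LL B) ∘ f from rfl,
      fderiv_comp x (LL B).differentiableAt (hDf x), (LL B).fderiv]
  have hGW : ∀ (μ : H) (x : Fin n → ℝ), x ∈ interior (S μ) → Gm x = LL (M μ) := by
    intro μ x hx
    have hx' : S μ ∈ nhds x := mem_nhds_iff.mpr ⟨interior (S μ), interior_subset,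
      isOpen_interior, hx⟩
    have hev : (fun y => f (A.mulVec y)) =ᶠ[nhds x] (fun y => (M μ).mulVec (f y)) := by
      filter_upwards [hx'] with y hy using hy
    have e1 : fderiv ℝ (fun y => f (A.mulVec y)) x
        = fderiv ℝ (fun y => (M μ).mulVec (f y)) x := hev.fderiv_eq
    rw [e2 x, e3 (M μ) x] at e1
    calc Gm x = ((fderiv ℝ f (A.mulVec x)).comp (LL A)).comp (fderiv ℝ finv (f x)) := rfl
      _ = ((LL (M μ)).comp (fderiv ℝ f x)).comp (fderiv ℝ finv (f x)) := by rw [e1]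
      _ = (LL (M μ)).comp ((fderiv ℝ f x).comp (fderiv ℝ finv (f x))) :=
          (ContinuousLinearMap.comp_assoc _ _ _)
      _ = LL (M μ) := by rw [hinv2 x, ContinuousLinearMap.comp_id]
  set T : Set ((Fin n → ℝ) →L[ℝ] (Fin n → ℝ)) := Set.range (fun μ : H => LL (M μ)) with hT
  have hTfin : T.Finite := Set.finite_range _
  have hGT : ∀ x : Fin n → ℝ, Gm x ∈ T := by
    intro x
    have hmaps : Set.MapsTo Gm (⋃ μ : H, interior (S μ)) T := by
      rintro y hy
      simp only [mem_iUnion] at hy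
      obtain ⟨μ, hμ⟩ := hy
      exact ⟨μ, (hGW μ y hμ).symm⟩
    have hxc : x ∈ closure (⋃ μ : H, interior (S μ)) := by
      rw [hW.closure_eq]; trivial
    have := map_mem_closure hGcont hxc hmaps
    rwa [hTfin.isClosed.closure_eq] at this
  -- clopen argument: Gm is constant
  obtain ⟨μ₀, hμ₀⟩ := hGT 0
  have hPclosed : IsClosed {x | Gm x = Gm 0} :=
    isClosed_eq hGcont continuous_const
  have hPopen : IsOpen {x | Gm x = Gm 0} := by
    rw [← isClosed_compl_iff]
    have : {x | Gm x = Gm 0}ᶜ = Gm ⁻¹' (T \ {Gm 0}) := by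
      ext x
      simp only [mem_compl_iff, mem_setOf_eq, mem_preimage, mem_diff, mem_singleton_iff]
      exact ⟨fun h => ⟨hGT x, h⟩, fun h => h.2⟩
    rw [this]
    exact ((hTfin.subset diff_subset).isClosed).preimage hGcont
  have hPuniv : {x | Gm x = Gm 0} = univ :=
    IsClopen.eq_univ ⟨hPclosed, hPopen⟩ ⟨0, rfl⟩
  have hGconst : ∀ x : Fin n → ℝ, Gm x = LL (M μ₀) := by
    intro x
    have hx : x ∈ {x | Gm x = Gm 0} := by rw [hPuniv]; trivial
    rw [hx, ← hμ₀]
  -- the difference function has zero derivative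
  set F := fun x => f (A.mulVec x) - (M μ₀).mulVec (f x) with hF
  have hDF : Differentiable ℝ F := by
    exact (hDf.comp (LL A).differentiable).sub ((LL (M μ₀)).differentiable.comp hDf)
  have hfd : ∀ x : Fin n → ℝ, fderiv ℝ F x = 0 := by
    intro x
    have d1 : DifferentiableAt ℝ (fun y => f (A.mulVec y)) x :=
      (hDf _).comp x (LL A).differentiableAt
    have d2 : DifferentiableAt ℝ (fun y => (M μ₀).mulVec (f y)) x :=
      (LL (M μ₀)).differentiableAt.comp x (hDf x)
    have key : (fderiv ℝ f (A.mulVec x)).comp (LL A) = (LL (M μ₀)).comp (fderiv ℝ f x) := by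
      have h := congrArg (fun q => q.comp (fderiv ℝ f x)) (hGconst x)
      rw [ContinuousLinearMap.comp_assoc, hinv1 x, ContinuousLinearMap.comp_id] at h
      exact h
    rw [hF, fderiv_fun_sub d1 d2, e2 x, e3 (M μ₀) x, key, sub_self]
  have hFconst := is_const_of_fderiv_eq_zero hDF hfd
  -- find a point where F vanishes
  obtain ⟨x₁, hx₁⟩ := hW.nonempty
  simp only [mem_iUnion] at hx₁
  obtain ⟨μ₁, hμ₁⟩ := hx₁
  have hMeq : M μ₁ = M μ₀ := LL_inj ((hGW μ₁ x₁ hμ₁).symm.trans (hGconst x₁))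
  have hx₁S : f (A.mulVec x₁) = (M μ₁).mulVec (f x₁) := by
    have h := interior_subset hμ₁
    exact h
  have hFx₁ : F x₁ = 0 := by
    rw [hF]
    simp only [hx₁S, hMeq, sub_self]
  refine ⟨(μ₀ : GL (Fin n) ℝ), μ₀.2, fun x => ?_⟩
  have : F x = 0 := (hFconst x x₁).trans hFx₁
  have := sub_eq_zero.mp this
  exact this

theorem diffeomorphism_induces_group_isomorphism
    (n : ℕ) (hn : 1 ≤ n) (G H : Subgroup (GL (Fin n) ℝ)) [Finite G] [Finite H]
    (f finv : (Fin n → ℝ) → (Fin n → ℝ))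
    (hf : ContDiff ℝ 1 f) (hfinv : ContDiff ℝ 1 finv)
    (hleft : Function.LeftInverse finv f) (hright : Function.RightInverse finv f)
    (h1 : ∀ γ ∈ G, ∀ x : Fin n → ℝ, ∃ μ ∈ H,
      f (Matrix.mulVec ((γ : GL (Fin n) ℝ) : Matrix (Fin n) (Fin n) ℝ) x) =
        Matrix.mulVec ((μ : GL (Fin n) ℝ) : Matrix (Fin n) (Fin n) ℝ) (f x))
    (h2 : ∀ μ ∈ H, ∀ y : Fin n → ℝ, ∃ γ ∈ G,
      finv (Matrix.mulVec ((μ : GL (Fin n) ℝ) : Matrix (Fin n) (Fin n) ℝ) y) =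
        Matrix.mulVec ((γ : GL (Fin n) ℝ) : Matrix (Fin n) (Fin n) ℝ) (finv y)) :
    ∃ Θ : G ≃* H, ∀ (γ : G) (x : Fin n → ℝ),
      f (Matrix.mulVec (((γ : GL (Fin n) ℝ)) : Matrix (Fin n) (Fin n) ℝ) x) =
        Matrix.mulVec (((Θ γ : GL (Fin n) ℝ)) : Matrix (Fin n) (Fin n) ℝ) (f x) := by
  classical
  -- uniform intertwiners for each γ and each μ
  have hcoreG : ∀ γ : G, ∃ μ : H, ∀ x,
      f (Matrix.mulVec ((γ : GL (Fin n) ℝ) : Matrix (Fin n) (Fin n) ℝ) x) =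
        Matrix.mulVec (((μ : GL (Fin n) ℝ)) : Matrix (Fin n) (Fin n) ℝ) (f x) := by
    intro γ
    obtain ⟨μ, hμH, hμ⟩ := core_uniform H f finv hf hfinv hleft hright
      ((γ : GL (Fin n) ℝ) : Matrix (Fin n) (Fin n) ℝ) (h1 γ.1 γ.2)
    exact ⟨⟨μ, hμH⟩, hμ⟩
  have hcoreH : ∀ μ : H, ∃ γ : G, ∀ y,
      finv (Matrix.mulVec ((μ : GL (Fin n) ℝ) : Matrix (Fin n) (Fin n) ℝ) y) =
        Matrix.mulVec (((γ : GL (Fin n) ℝ)) : Matrix (Fin n) (Fin n) ℝ) (finv y) := by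
    intro μ
    obtain ⟨γ, hγG, hγ⟩ := core_uniform G finv f hfinv hf hright hleft
      ((μ : GL (Fin n) ℝ) : Matrix (Fin n) (Fin n) ℝ) (h2 μ.1 μ.2)
    exact ⟨⟨γ, hγG⟩, hγ⟩
  choose Φ hΦ using hcoreG
  choose Ψ hΨ using hcoreH
  have hsurjf : Function.Surjective f := fun y => ⟨finv y, hright y⟩
  -- equality in H from equality of matrix actions
  have hHeq : ∀ μ ν : H, (∀ y, Matrix.mulVec ((μ : GL (Fin n) ℝ) : Matrix (Fin n) (Fin n) ℝ) y
      = Matrix.mulVec ((ν : GL (Fin n) ℝ) : Matrix (Fin n) (Fin n) ℝ) y) → μ = ν := by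
    intro μ ν h
    exact Subtype.ext (Units.ext (matrix_eq_of_mulVec h))
  have hGeq : ∀ γ δ : G, (∀ y, Matrix.mulVec ((γ : GL (Fin n) ℝ) : Matrix (Fin n) (Fin n) ℝ) y
      = Matrix.mulVec ((δ : GL (Fin n) ℝ) : Matrix (Fin n) (Fin n) ℝ) y) → γ = δ := by
    intro γ δ h
    exact Subtype.ext (Units.ext (matrix_eq_of_mulVec h))
  have hmul : ∀ γ₁ γ₂ : G, Φ (γ₁ * γ₂) = Φ γ₁ * Φ γ₂ := by
    intro γ₁ γ₂
    apply hHeq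
    intro y
    obtain ⟨x, rfl⟩ := hsurjf y
    calc Matrix.mulVec ((Φ (γ₁ * γ₂) : GL (Fin n) ℝ) : Matrix (Fin n) (Fin n) ℝ) (f x)
        = f (Matrix.mulVec (((γ₁ * γ₂ : G) : GL (Fin n) ℝ) : Matrix (Fin n) (Fin n) ℝ) x) :=
          (hΦ (γ₁ * γ₂) x).symm
      _ = f (Matrix.mulVec ((γ₁ : GL (Fin n) ℝ) : Matrix (Fin n) (Fin n) ℝ)
            (Matrix.mulVec ((γ₂ : GL (Fin n) ℝ) : Matrix (Fin n) (Fin n) ℝ) x)) := by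
          rw [Matrix.mulVec_mulVec]
          norm_cast
      _ = Matrix.mulVec ((Φ γ₁ : GL (Fin n) ℝ) : Matrix (Fin n) (Fin n) ℝ)
            (Matrix.mulVec ((Φ γ₂ : GL (Fin n) ℝ) : Matrix (Fin n) (Fin n) ℝ) (f x)) := by
          rw [hΦ γ₁ _, hΦ γ₂ x]
      _ = Matrix.mulVec (((Φ γ₁ * Φ γ₂ : H) : GL (Fin n) ℝ) : Matrix (Fin n) (Fin n) ℝ) (f x) := by
          rw [Matrix.mulVec_mulVec]
          norm_cast
  have hinj : Function.Injective Φ := by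
    intro γ δ h
    apply hGeq
    intro x
    apply hleft.injective
    have e1 := hΦ γ x
    have e2 := hΦ δ x
    rw [e1, e2, h]
  have hsurjΦ : ∀ μ : H, Φ (Ψ μ) = μ := by
    intro μ
    apply hHeq
    intro y
    calc Matrix.mulVec ((Φ (Ψ μ) : GL (Fin n) ℝ) : Matrix (Fin n) (Fin n) ℝ) y
        = Matrix.mulVec ((Φ (Ψ μ) : GL (Fin n) ℝ) : Matrix (Fin n) (Fin n) ℝ) (f (finv y)) := by
          rw [hright y]
      _ = f (Matrix.mulVec ((Ψ μ : GL (Fin n) ℝ) : Matrix (Fin n) (Fin n) ℝ) (finv y)) :=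
          (hΦ (Ψ μ) (finv y)).symm
      _ = f (finv (Matrix.mulVec ((μ : GL (Fin n) ℝ) : Matrix (Fin n) (Fin n) ℝ) y)) := by
          rw [hΨ μ y]
      _ = Matrix.mulVec ((μ : GL (Fin n) ℝ) : Matrix (Fin n) (Fin n) ℝ) y := hright _
  exact ⟨MulEquiv.ofBijective (MonoidHom.mk' Φ hmul) ⟨hinj, fun μ => ⟨Ψ μ, hsurjΦ μ⟩⟩,
    fun γ x => hΦ γ x⟩
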